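/- The infimum over u in (-1, m-1] (u ≠ 0) of ((1+u) ln(1+u) - u) / u^2 is achieved at u = m-1, for any m > 1. -/

import Mathlib

open Set

private lemma log1p_le (x : ℝ) (hx : -1 < x) : Real.log (1 + x) ≤ x := by
  have := Real.log_le_sub_one_of_pos (by linarith : (0:ℝ) < 1 + x)
  linarith

private lemma log1p_ge (x : ℝ) (hx : -1 < x) : x / (1 + x) ≤ Real.log (1 + x) := by
  have h0 : (0:ℝ) < 1 + x := by linarith
  have := Real.log_le_sub_one_of_pos (by positivity : (0:ℝ) < (1 + x)⁻¹)
  rw [Real.log_inv] at this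
  have : -Real.log (1 + x) ≤ (1 + x)⁻¹ - 1 := this
  have h1 : (1 + x)⁻¹ - 1 = -(x / (1 + x)) := by field_simp; ring
  rw [h1] at this; linarith

private lemma psi_hasDeriv (x : ℝ) (hx : -1 < x) :
    HasDerivAt (fun u : ℝ => u + u ^ 2 / 2 - (1 + u) * Real.log (1 + u))
      (x - Real.log (1 + x)) x := by
  have h0 : (1:ℝ) + x ≠ 0 := by linarith
  have h1 : HasDerivAt (fun u : ℝ => 1 + u) 1 x := (hasDerivAt_id x).const_add 1
  have h2 : HasDerivAt (fun u : ℝ => Real.log (1 + u)) (1 / (1 + x)) x := by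
    simpa using h1.log h0
  have h3 := h1.mul h2
  have h4 : HasDerivAt (fun u : ℝ => u + u ^ 2 / 2) (1 + x) x := by
    have := ((hasDerivAt_pow 2 x).div_const 2)
    exact ((hasDerivAt_id' x).add this).congr_deriv (by norm_num)
  have := h4.sub h3
  refine this.congr_deriv ?_
  rw [mul_one_div_cancel h0]
  ring

private lemma psi_mono :
    MonotoneOn (fun u : ℝ => u + u ^ 2 / 2 - (1 + u) * Real.log (1 + u)) (Ioi (-1)) := by
  apply monotoneOn_of_deriv_nonneg (convex_Ioi _)
  · exact fun x hx => ((psi_hasDeriv x hx).continuousAt).continuousWithinAt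
  · intro x hx
    rw [interior_Ioi] at hx
    exact (psi_hasDeriv x hx).differentiableAt.differentiableWithinAt
  · intro x hx
    rw [interior_Ioi] at hx
    rw [(psi_hasDeriv x hx).deriv]
    have := log1p_le x hx
    linarith

private lemma phi_nonpos (x : ℝ) (hx : 0 ≤ x) : x * Real.log (1 + x) -
    2 * ((1 + x) * Real.log (1 + x) - x) ≤ 0 := by
  -- this equals 2x - (x+2) log(1+x)
  have key : ∀ y : ℝ, 0 ≤ y → 2 * y - (y + 2) * Real.log (1 + y) ≤ 0 := by
    have hder : ∀ y : ℝ, -1 < y →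
        HasDerivAt (fun u : ℝ => 2 * u - (u + 2) * Real.log (1 + u))
          (y / (1 + y) - Real.log (1 + y)) y := by
      intro y hy
      have h0 : (1:ℝ) + y ≠ 0 := by linarith
      have h1 : HasDerivAt (fun u : ℝ => 1 + u) 1 y := (hasDerivAt_id y).const_add 1
      have h2 : HasDerivAt (fun u : ℝ => Real.log (1 + u)) (1 / (1 + y)) y := by
        simpa using h1.log h0
      have h3 : HasDerivAt (fun u : ℝ => u + 2) 1 y := (hasDerivAt_id y).add_const 2
      have h4 := (h3.mul h2)
      have h5 : HasDerivAt (fun u : ℝ => 2 * u) 2 y := by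
        simpa using (hasDerivAt_id y).const_mul 2
      have := h5.sub h4
      refine this.congr_deriv ?_
      have e : (y + 2) * (1 / (1 + y)) = 2 - y / (1 + y) := by
        rw [eq_sub_iff_add_eq, mul_one_div, ← add_div, div_eq_iff h0]; ring
      rw [e]
      ring
    have hanti : AntitoneOn (fun u : ℝ => 2 * u - (u + 2) * Real.log (1 + u)) (Ici 0) := by
      apply antitoneOn_of_deriv_nonpos (convex_Ici _)
      · intro x hx
        exact ((hder x (by simp at hx; linarith)).continuousAt).continuousWithinAt
      · intro x hx
        rw [interior_Ici] at hx
        exact (hder x (by simp at hx; linarith)).differentiableAt.differentiableWithinAt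
      · intro x hx
        rw [interior_Ici] at hx
        have hx' : -1 < x := by simp at hx; linarith
        rw [(hder x hx').deriv]
        have := log1p_ge x hx'
        linarith
    intro y hy
    have := hanti (self_mem_Ici) hy hy
    simpa using this
  have := key x hx
  nlinarith [this]

private lemma g_anti :
    AntitoneOn (fun u : ℝ => ((1 + u) * Real.log (1 + u) - u) / u ^ 2) (Ioi 0) := by
  have hder : ∀ x : ℝ, 0 < x →
      HasDerivAt (fun u : ℝ => ((1 + u) * Real.log (1 + u) - u) / u ^ 2)
        ((x * Real.log (1 + x) - 2 * ((1 + x) * Real.log (1 + x) - x)) / x ^ 3) x := by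
    intro x hx
    have h0 : (1:ℝ) + x ≠ 0 := by linarith
    have hx0 : x ≠ 0 := ne_of_gt hx
    have h1 : HasDerivAt (fun u : ℝ => 1 + u) 1 x := (hasDerivAt_id x).const_add 1
    have h2 : HasDerivAt (fun u : ℝ => Real.log (1 + u)) (1 / (1 + x)) x := by
      simpa using h1.log h0
    have h3 := h1.mul h2
    have h4 : HasDerivAt (fun u : ℝ => (1 + u) * Real.log (1 + u) - u)
        (Real.log (1 + x)) x := by
      have := h3.sub (hasDerivAt_id x)
      refine this.congr_deriv ?_
      rw [mul_one_div_cancel h0]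
      ring
    have h5 : HasDerivAt (fun u : ℝ => u ^ 2) (2 * x) x := by
      simpa using hasDerivAt_pow 2 x
    have h6 := h4.div h5 (pow_ne_zero 2 hx0)
    refine h6.congr_deriv ?_
    rw [div_eq_div_iff (pow_ne_zero 2 (pow_ne_zero 2 hx0)) (pow_ne_zero 3 hx0)]
    ring
  apply antitoneOn_of_deriv_nonpos (convex_Ioi _)
  · intro x hx
    exact ((hder x hx).continuousAt).continuousWithinAt
  · intro x hx
    rw [interior_Ioi] at hx
    exact (hder x hx).differentiableAt.differentiableWithinAt
  · intro x hx
    rw [interior_Ioi] at hx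
    rw [(hder x hx).deriv]
    have hnum := phi_nonpos x (le_of_lt hx)
    have hden : (0:ℝ) < x ^ 3 := pow_pos hx 3
    exact div_nonpos_of_nonpos_of_nonneg hnum (le_of_lt hden)

/-- For `m > 1`, the infimum over `u ∈ (-1, m-1]`, `u ≠ 0`, of
`((1+u) ln(1+u) - u)/u²` is `(m ln m - m + 1)/(m-1)²`, attained at `u = m-1`. -/
theorem stmt2 (m : ℝ) (hm : 1 < m) :
    IsLeast
      ((fun u : ℝ => ((1 + u) * Real.log (1 + u) - u) / u ^ 2) ''
        (Set.Ioc (-1) (m - 1) \ {0}))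
      ((m * Real.log m - m + 1) / (m - 1) ^ 2) := by
  have hc : 0 < m - 1 := by linarith
  have hval : ((1 + (m - 1)) * Real.log (1 + (m - 1)) - (m - 1)) / (m - 1) ^ 2
      = (m * Real.log m - m + 1) / (m - 1) ^ 2 := by
    ring_nf
  constructor
  · refine ⟨m - 1, ⟨⟨by linarith, le_refl _⟩, by simp [ne_of_gt hc]⟩, hval⟩
  · rintro y ⟨u, ⟨⟨hu1, hu2⟩, hu0⟩, rfl⟩
    simp only [mem_singleton_iff] at hu0
    rw [← hval]
    rcases lt_or_gt_of_ne hu0 with hneg | hpos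
    · -- u < 0 : g(u) ≥ 1/2 ≥ g(m-1)
      have hpsi := psi_mono
      have h1 : u + u ^ 2 / 2 - (1 + u) * Real.log (1 + u) ≤ 0 := by
        have := hpsi (mem_Ioi.mpr hu1) (mem_Ioi.mpr (by norm_num : (-1:ℝ) < 0))
          (le_of_lt hneg)
        simpa using this
      have h2 : 0 ≤ (m - 1) + (m - 1) ^ 2 / 2 - (1 + (m - 1)) * Real.log (1 + (m - 1)) := by
        have := hpsi (mem_Ioi.mpr (by norm_num : (-1:ℝ) < 0))
          (mem_Ioi.mpr (by linarith : (-1:ℝ) < m - 1)) (le_of_lt hc)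
        simpa using this
      have hu2pos : (0:ℝ) < u ^ 2 := by positivity
      have hc2pos : (0:ℝ) < (m - 1) ^ 2 := by positivity
      have ha : (1 + (m - 1)) * Real.log (1 + (m - 1)) - (m - 1) ≤ (m - 1) ^ 2 / 2 := by
        linarith
      have hb : u ^ 2 / 2 ≤ (1 + u) * Real.log (1 + u) - u := by linarith
      calc ((1 + (m - 1)) * Real.log (1 + (m - 1)) - (m - 1)) / (m - 1) ^ 2
          ≤ ((m - 1) ^ 2 / 2) / (m - 1) ^ 2 := by gcongr
        _ = 1 / 2 := by field_simp
        _ = (u ^ 2 / 2) / u ^ 2 := by field_simp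
        _ ≤ ((1 + u) * Real.log (1 + u) - u) / u ^ 2 := by gcongr
    · exact g_anti (mem_Ioi.mpr hpos) (mem_Ioi.mpr hc) hu2
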